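/- For stable configuration structures without equidepth auto-concurrency, reverse bisimulation equivalence coincides with hereditary history-preserving bisimulation equivalence. -/

import Mathlib

universe u v

/-- A configuration structure over event type `E` and label alphabet `L`:
a family of finite sets of events (configurations) with a labelling. -/
structure CS (E : Type u) (L : Type v) where
  C : Set (Set E)
  finite : ∀ X ∈ C, X.Finite
  label : E → L

namespace CS

variable {E E₁ E₂ : Type u} {L : Type v}

/-- Stability: rooted, connected, closed under bounded unions and intersections. -/
def IsStable (𝒞 : CS E L) : Prop :=
  ∅ ∈ 𝒞.C ∧
  (∀ X ∈ 𝒞.C, X ≠ ∅ → ∃ e ∈ X, X \ {e} ∈ 𝒞.C) ∧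
  (∀ X ∈ 𝒞.C, ∀ Y ∈ 𝒞.C, ∀ Z ∈ 𝒞.C, X ∪ Y ⊆ Z → X ∪ Y ∈ 𝒞.C) ∧
  (∀ X ∈ 𝒞.C, ∀ Y ∈ 𝒞.C, ∀ Z ∈ 𝒞.C, X ∪ Y ⊆ Z → X ∩ Y ∈ 𝒞.C)

/-- Causality: `d ≤_X e` iff every sub-configuration of `X` containing `e` contains `d`. -/
def le (𝒞 : CS E L) (X : Set E) (d e : E) : Prop :=
  ∀ Y ∈ 𝒞.C, Y ⊆ X → e ∈ Y → d ∈ Y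

/-- Strict causality `d <_X e`. -/
def lt (𝒞 : CS E L) (X : Set E) (d e : E) : Prop :=
  le 𝒞 X d e ∧ d ≠ e

/-- Concurrency within a configuration. -/
def co (𝒞 : CS E L) (X : Set E) (d e : E) : Prop :=
  ¬ lt 𝒞 X d e ∧ ¬ lt 𝒞 X e d

/-- The set of minimal events of a configuration. -/
def minE (𝒞 : CS E L) (X : Set E) : Set E :=
  {e | e ∈ X ∧ ∀ d ∈ X, ¬ lt 𝒞 X d e}

/-- Depth of an event in a configuration: the length of the longest
causal chain (w.r.t. `<_X`) in `X` up to and including `e`. -/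
noncomputable def depth (𝒞 : CS E L) (X : Set E) (e : E) : ℕ :=
  sSup {n | ∃ l : List E, l.length = n ∧ l.Chain' (lt 𝒞 X) ∧
    (∀ x ∈ l, x ∈ X) ∧ l.getLast? = some e}

/-- Multiset of labels of a (finite) set of events. -/
noncomputable def labelMS (𝒞 : CS E L) (S : Set E) : Multiset L := by
  classical exact if h : S.Finite then h.toFinset.val.map 𝒞.label else 0

/-- Single-event forward transition `X —a→ X'`. -/
def FTrans (𝒞 : CS E L) (a : L) (X X' : Set E) : Prop :=
  X ∈ 𝒞.C ∧ X' ∈ 𝒞.C ∧ X ⊆ X' ∧ ∃ e, X' \ X = {e} ∧ 𝒞.label e = a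

/-- Single-event reverse transition `X ⇝a X'`. -/
def RTrans (𝒞 : CS E L) (a : L) (X X' : Set E) : Prop :=
  FTrans 𝒞 a X' X

/-- Step transition `X —A→ X'`: the added events are pairwise concurrent
in `X'` and carry the label multiset `A`. -/
def Step (𝒞 : CS E L) (A : Multiset L) (X X' : Set E) : Prop :=
  X ∈ 𝒞.C ∧ X' ∈ 𝒞.C ∧ X ⊆ X' ∧ ∃ F : Finset E, ↑F = X' \ X ∧
    (∀ d ∈ F, ∀ e ∈ F, co 𝒞 X' d e) ∧ F.val.map 𝒞.label = A

/-- Reverse step transition `X ⇝A X'`. -/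
def RStep (𝒞 : CS E L) (A : Multiset L) (X X' : Set E) : Prop :=
  Step 𝒞 A X' X

/-- Equidepth step: all added events have the same depth in `X'`. -/
def EqStep (𝒞 : CS E L) (A : Multiset L) (X X' : Set E) : Prop :=
  Step 𝒞 A X X' ∧ ∀ d ∈ X' \ X, ∀ e ∈ X' \ X, depth 𝒞 X' d = depth 𝒞 X' e

/-- Reverse equidepth step `X ⇝A= X'`. -/
def REqStep (𝒞 : CS E L) (A : Multiset L) (X X' : Set E) : Prop :=
  EqStep 𝒞 A X' X

/-- Single-event forward transition with depth: the new event has label `a`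
and depth `k` in `X'`. -/
def FTransD (𝒞 : CS E L) (a : L) (k : ℕ) (X X' : Set E) : Prop :=
  X ∈ 𝒞.C ∧ X' ∈ 𝒞.C ∧ X ⊆ X' ∧
    ∃ e, X' \ X = {e} ∧ 𝒞.label e = a ∧ depth 𝒞 X' e = k

/-- Single-event reverse transition with depth. -/
def RTransD (𝒞 : CS E L) (a : L) (k : ℕ) (X X' : Set E) : Prop :=
  FTransD 𝒞 a k X' X

/-- A multiset of labels is homogeneous if all its elements are equal. -/
def Hom (A : Multiset L) : Prop := ∀ a ∈ A, ∀ b ∈ A, a = b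

/-- `R` is a relation between configurations of `𝒞` and `𝒟`, containing `(∅, ∅)`. -/
def Dom (𝒞 : CS E₁ L) (𝒟 : CS E₂ L) (R : Set E₁ → Set E₂ → Prop) : Prop :=
  R ∅ ∅ ∧ ∀ X Y, R X Y → X ∈ 𝒞.C ∧ Y ∈ 𝒟.C

/-- Interleaving bisimulation. -/
def IsIB (𝒞 : CS E₁ L) (𝒟 : CS E₂ L) (R : Set E₁ → Set E₂ → Prop) : Prop :=
  Dom 𝒞 𝒟 R ∧ ∀ X Y, R X Y →
    (∀ a X', FTrans 𝒞 a X X' → ∃ Y', FTrans 𝒟 a Y Y' ∧ R X' Y') ∧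
    (∀ a Y', FTrans 𝒟 a Y Y' → ∃ X', FTrans 𝒞 a X X' ∧ R X' Y')

/-- Reverse bisimulation: an IB also matching reverse single-event transitions. -/
def IsRB (𝒞 : CS E₁ L) (𝒟 : CS E₂ L) (R : Set E₁ → Set E₂ → Prop) : Prop :=
  IsIB 𝒞 𝒟 R ∧ ∀ X Y, R X Y →
    (∀ a X', RTrans 𝒞 a X X' → ∃ Y', RTrans 𝒟 a Y Y' ∧ R X' Y') ∧
    (∀ a Y', RTrans 𝒟 a Y Y' → ∃ X', RTrans 𝒞 a X X' ∧ R X' Y')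

/-- Step bisimulation. -/
def IsSB (𝒞 : CS E₁ L) (𝒟 : CS E₂ L) (R : Set E₁ → Set E₂ → Prop) : Prop :=
  Dom 𝒞 𝒟 R ∧ ∀ X Y, R X Y →
    (∀ A X', Step 𝒞 A X X' → ∃ Y', Step 𝒟 A Y Y' ∧ R X' Y') ∧
    (∀ A Y', Step 𝒟 A Y Y' → ∃ X', Step 𝒞 A X X' ∧ R X' Y')

/-- Reverse step bisimulation: an SB also matching reverse steps. -/
def IsRSB (𝒞 : CS E₁ L) (𝒟 : CS E₂ L) (R : Set E₁ → Set E₂ → Prop) : Prop :=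
  IsSB 𝒞 𝒟 R ∧ ∀ X Y, R X Y →
    (∀ A X', RStep 𝒞 A X X' → ∃ Y', RStep 𝒟 A Y Y' ∧ R X' Y') ∧
    (∀ A Y', RStep 𝒟 A Y Y' → ∃ X', RStep 𝒞 A X X' ∧ R X' Y')

/-- Reverse homogeneous step bisimulation: matches forward single-event
transitions and reverse homogeneous steps. -/
def IsRHSB (𝒞 : CS E₁ L) (𝒟 : CS E₂ L) (R : Set E₁ → Set E₂ → Prop) : Prop :=
  Dom 𝒞 𝒟 R ∧ ∀ X Y, R X Y →
    (∀ a X', FTrans 𝒞 a X X' → ∃ Y', FTrans 𝒟 a Y Y' ∧ R X' Y') ∧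
    (∀ a Y', FTrans 𝒟 a Y Y' → ∃ X', FTrans 𝒞 a X X' ∧ R X' Y') ∧
    (∀ A X', Hom A → RStep 𝒞 A X X' → ∃ Y', RStep 𝒟 A Y Y' ∧ R X' Y') ∧
    (∀ A Y', Hom A → RStep 𝒟 A Y Y' → ∃ X', RStep 𝒞 A X X' ∧ R X' Y')

/-- Reverse homogeneous equidepth step bisimulation. -/
def IsRHESB (𝒞 : CS E₁ L) (𝒟 : CS E₂ L) (R : Set E₁ → Set E₂ → Prop) : Prop :=
  Dom 𝒞 𝒟 R ∧ ∀ X Y, R X Y →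
    (∀ a X', FTrans 𝒞 a X X' → ∃ Y', FTrans 𝒟 a Y Y' ∧ R X' Y') ∧
    (∀ a Y', FTrans 𝒟 a Y Y' → ∃ X', FTrans 𝒞 a X X' ∧ R X' Y') ∧
    (∀ A X', Hom A → REqStep 𝒞 A X X' → ∃ Y', REqStep 𝒟 A Y Y' ∧ R X' Y') ∧
    (∀ A Y', Hom A → REqStep 𝒟 A Y Y' → ∃ X', REqStep 𝒞 A X X' ∧ R X' Y')

/-- Depth-respecting bisimulation. -/
def IsDB (𝒞 : CS E₁ L) (𝒟 : CS E₂ L) (R : Set E₁ → Set E₂ → Prop) : Prop :=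
  Dom 𝒞 𝒟 R ∧ ∀ X Y, R X Y →
    (∀ a k X', FTransD 𝒞 a k X X' → ∃ Y', FTransD 𝒟 a k Y Y' ∧ R X' Y') ∧
    (∀ a k Y', FTransD 𝒟 a k Y Y' → ∃ X', FTransD 𝒞 a k X X' ∧ R X' Y')

/-- Reverse depth-respecting bisimulation. -/
def IsRDB (𝒞 : CS E₁ L) (𝒟 : CS E₂ L) (R : Set E₁ → Set E₂ → Prop) : Prop :=
  IsDB 𝒞 𝒟 R ∧ ∀ X Y, R X Y →
    (∀ a k X', RTransD 𝒞 a k X X' → ∃ Y', RTransD 𝒟 a k Y Y' ∧ R X' Y') ∧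
    (∀ a k Y', RTransD 𝒟 a k Y Y' → ∃ X', RTransD 𝒞 a k X X' ∧ R X' Y')

/-- The lifting of a configuration structure w.r.t. a configuration `M`. -/
def lift (𝒞 : CS E L) (M : Set E) : CS E L where
  C := {Z | ∃ X, X ∈ 𝒞.C ∧ M ⊆ X ∧ minE 𝒞 X = minE 𝒞 M ∧ Z = X \ M}
  finite := by
    rintro Z ⟨X, hX, -, -, rfl⟩
    exact (𝒞.finite X hX).subset Set.diff_subset
  label := 𝒞.label

/-- Events of `X` of depth at most `n`. -/
def levelLe (𝒞 : CS E L) (X : Set E) (n : ℕ) : Set E :=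
  {e | e ∈ X ∧ depth 𝒞 X e ≤ n}

/-- Events of `X` of depth exactly `n`. -/
def levelEq (𝒞 : CS E L) (X : Set E) (n : ℕ) : Set E :=
  {e | e ∈ X ∧ depth 𝒞 X e = n}

/-- No equidepth auto-concurrency: distinct concurrent events never share
both label and depth. -/
def NoEqAC (𝒞 : CS E L) : Prop :=
  ∀ X ∈ 𝒞.C, ∀ d ∈ X, ∀ e ∈ X, co 𝒞 X d e → 𝒞.label d = 𝒞.label e →
    depth 𝒞 X d = depth 𝒞 X e → d = e

/-- `f` (a set of pairs) is a label- and order-preserving isomorphism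
between configurations `X` and `Y`. -/
def IsIso (𝒞 : CS E₁ L) (𝒟 : CS E₂ L) (X : Set E₁) (Y : Set E₂)
    (f : Set (E₁ × E₂)) : Prop :=
  (∀ p ∈ f, p.1 ∈ X ∧ p.2 ∈ Y) ∧
  (∀ d ∈ X, ∃! e, (d, e) ∈ f) ∧
  (∀ e ∈ Y, ∃! d, (d, e) ∈ f) ∧
  (∀ p ∈ f, 𝒞.label p.1 = 𝒟.label p.2) ∧
  (∀ p ∈ f, ∀ q ∈ f, (lt 𝒞 X p.1 q.1 ↔ lt 𝒟 Y p.2 q.2))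

/-- Hereditary history-preserving bisimulation. -/
def IsHH (𝒞 : CS E₁ L) (𝒟 : CS E₂ L)
    (R : Set (Set E₁ × Set E₂ × Set (E₁ × E₂))) : Prop :=
  (∅, ∅, ∅) ∈ R ∧
  ∀ X Y f, (X, Y, f) ∈ R →
    X ∈ 𝒞.C ∧ Y ∈ 𝒟.C ∧ IsIso 𝒞 𝒟 X Y f ∧
    (∀ a X', FTrans 𝒞 a X X' → ∃ Y' f', FTrans 𝒟 a Y Y' ∧
      (X', Y', f') ∈ R ∧ {p ∈ f' | p.1 ∈ X} = f) ∧
    (∀ a Y', FTrans 𝒟 a Y Y' → ∃ X' f', FTrans 𝒞 a X X' ∧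
      (X', Y', f') ∈ R ∧ {p ∈ f' | p.1 ∈ X} = f) ∧
    (∀ a X', RTrans 𝒞 a X X' → ∃ Y' f', RTrans 𝒟 a Y Y' ∧
      (X', Y', f') ∈ R ∧ {p ∈ f | p.1 ∈ X'} = f')

end CS

open CS
section Aux

variable {E : Type u} {L : Type v} {𝒞 : CS E L}

lemma leTrans {X : Set E} {a b c : E} (h1 : le 𝒞 X a b) (h2 : le 𝒞 X b c) :
    le 𝒞 X a c := fun Y hY hYX hc => h1 Y hY hYX (h2 Y hY hYX hc)

lemma unionMem (h : IsStable 𝒞) {X Y Z : Set E} (hX : X ∈ 𝒞.C) (hY : Y ∈ 𝒞.C)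
    (hZ : Z ∈ 𝒞.C) (hs : X ∪ Y ⊆ Z) : X ∪ Y ∈ 𝒞.C :=
  h.2.2.1 X hX Y hY Z hZ hs

lemma interMem (h : IsStable 𝒞) {X Y Z : Set E} (hX : X ∈ 𝒞.C) (hY : Y ∈ 𝒞.C)
    (hZ : Z ∈ 𝒞.C) (hs : X ∪ Y ⊆ Z) : X ∩ Y ∈ 𝒞.C :=
  h.2.2.2 X hX Y hY Z hZ hs

lemma leRestrict (h : IsStable 𝒞) {X Y : Set E} (hX : X ∈ 𝒞.C) (hY : Y ∈ 𝒞.C)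
    (hYX : Y ⊆ X) {p q : E} (hq : q ∈ Y) : le 𝒞 Y p q ↔ le 𝒞 X p q := by
  constructor
  · intro hle Z hZ hZX hqZ
    have hZY : Z ∩ Y ∈ 𝒞.C := interMem h hZ hY hX (Set.union_subset hZX hYX)
    exact (hle (Z ∩ Y) hZY Set.inter_subset_right ⟨hqZ, hq⟩).1
  · intro hle Z hZ hZY hqZ
    exact hle Z hZ (hZY.trans hYX) hqZ

lemma ltRestrict (h : IsStable 𝒞) {X Y : Set E} (hX : X ∈ 𝒞.C) (hY : Y ∈ 𝒞.C)
    (hYX : Y ⊆ X) {p q : E} (hq : q ∈ Y) : lt 𝒞 Y p q ↔ lt 𝒞 X p q := by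
  unfold lt
  rw [leRestrict h hX hY hYX hq]

lemma notLeOfRemovable {X : Set E} {d e : E} (hX' : X \ {e} ∈ 𝒞.C)
    (hd : d ∈ X) (hde : d ≠ e) : ¬ le 𝒞 X e d := by
  intro hle
  have := hle (X \ {e}) hX' Set.diff_subset ⟨hd, by simp [hde]⟩
  exact this.2 rfl

lemma maximalOfRemovable {X : Set E} {e : E} (hX' : X \ {e} ∈ 𝒞.C) :
    ∀ d ∈ X, ¬ lt 𝒞 X e d := by
  intro d hd hlt
  exact notLeOfRemovable hX' hd (Ne.symm hlt.2) hlt.1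

lemma removableOfMaximal (h : IsStable 𝒞) {X : Set E} (hX : X ∈ 𝒞.C) {e : E}
    (he : e ∈ X) (hmax : ∀ d ∈ X, ¬ lt 𝒞 X e d) : X \ {e} ∈ 𝒞.C := by
  have key : ∀ n : ℕ, ∀ S : Set E, S.Finite → S.ncard ≤ n → S ⊆ X \ {e} →
      ∃ W ∈ 𝒞.C, S ⊆ W ∧ W ⊆ X \ {e} := by
    intro n
    induction n with
    | zero =>
      intro S hS hcard _
      have : S = ∅ := by rw [← Set.ncard_eq_zero hS]; omega
      exact ⟨∅, h.1, by simp [this], Set.empty_subset _⟩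
    | succ n ih =>
      intro S hS hcard hsub
      rcases Set.eq_empty_or_nonempty S with rfl | ⟨d, hdS⟩
      · exact ⟨∅, h.1, Set.empty_subset _, Set.empty_subset _⟩
      have hcard' : (S \ {d}).ncard ≤ n := by
        have := Set.ncard_diff_singleton_lt_of_mem hdS hS
        omega
      obtain ⟨W, hW, hSW, hWX⟩ := ih (S \ {d}) (hS.subset Set.diff_subset) hcard'
        (Set.diff_subset.trans hsub)
      have hdX : d ∈ X \ {e} := hsub hdS
      have hnle : ¬ le 𝒞 X e d := by
        intro hle
        exact hmax d hdX.1 ⟨hle, fun hed => hdX.2 (by simp [hed.symm])⟩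
      simp only [le] at hnle
      push_neg at hnle
      obtain ⟨Z, hZ, hZX, hdZ, heZ⟩ := hnle
      refine ⟨W ∪ Z, unionMem h hW hZ hX ?_, ?_, ?_⟩
      · exact Set.union_subset (hWX.trans Set.diff_subset) hZX
      · intro x hx
        by_cases hxd : x = d
        · exact Or.inr (hxd ▸ hdZ)
        · exact Or.inl (hSW ⟨hx, by simp [hxd]⟩)
      · refine Set.union_subset hWX (fun x hx => ⟨hZX hx, ?_⟩)
        simp only [Set.mem_singleton_iff]
        rintro rfl
        exact heZ hx
  obtain ⟨W, hW, hsub1, hsub2⟩ := key (X \ {e}).ncard (X \ {e})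
    ((𝒞.finite X hX).subset Set.diff_subset) le_rfl subset_rfl
  rwa [Set.Subset.antisymm hsub2 hsub1] at hW

lemma leAntisymm (h : IsStable 𝒞) :
    ∀ X ∈ 𝒞.C, ∀ d ∈ X, ∀ e ∈ X, le 𝒞 X d e → le 𝒞 X e d → d = e := by
  have main : ∀ n : ℕ, ∀ X ∈ 𝒞.C, X.ncard ≤ n →
      ∀ d ∈ X, ∀ e ∈ X, le 𝒞 X d e → le 𝒞 X e d → d = e := by
    intro n
    induction n with
    | zero =>
      intro X hX hcard d hd
      have hX0 : X = ∅ := by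
        rw [← Set.ncard_eq_zero (𝒞.finite X hX)]; omega
      exact absurd hd (by simp [hX0])
    | succ n ih =>
      intro X hX hcard d hd e he hde hed
      by_contra hne
      obtain ⟨u, hu, hXu⟩ := h.2.1 X hX (fun hemp => by rw [hemp] at hd; exact hd)
      by_cases hud : u = d
      · subst hud
        exact (hde (X \ {u}) hXu Set.diff_subset ⟨he, by simp; exact fun h' => hne h'.symm⟩).2 rfl
      by_cases hue : u = e
      · subst hue
        exact (hed (X \ {u}) hXu Set.diff_subset ⟨hd, by simp; exact fun h' => hne h'⟩).2 rfl
      have hcard' : (X \ {u}).ncard ≤ n := by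
        have := Set.ncard_diff_singleton_lt_of_mem hu (𝒞.finite X hX)
        omega
      exact hne (ih (X \ {u}) hXu hcard' d ⟨hd, by simp; exact fun h' => hud h'.symm⟩
        e ⟨he, by simp; exact fun h' => hue h'.symm⟩
        (fun Z hZ hZX => hde Z hZ (hZX.trans Set.diff_subset))
        (fun Z hZ hZX => hed Z hZ (hZX.trans Set.diff_subset)))
  intro X hX
  exact main X.ncard X hX le_rfl

lemma ltTrans (h : IsStable 𝒞) {X : Set E} (hX : X ∈ 𝒞.C) {a b c : E}
    (ha : a ∈ X) (hb : b ∈ X) (hc : c ∈ X)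
    (h1 : lt 𝒞 X a b) (h2 : lt 𝒞 X b c) : lt 𝒞 X a c := by
  refine ⟨leTrans h1.1 h2.1, ?_⟩
  rintro rfl
  exact h2.2 (leAntisymm h X hX b hb a ha h2.1 h1.1)

end Aux
section Aux2

variable {E : Type u} {L : Type v} {𝒞 : CS E L}

/-- The set whose sup is the depth. -/
def dset (𝒞 : CS E L) (X : Set E) (e : E) : Set ℕ :=
  {n | ∃ l : List E, l.length = n ∧ l.Chain' (lt 𝒞 X) ∧
    (∀ x ∈ l, x ∈ X) ∧ l.getLast? = some e}

lemma depth_eq_sSup (X : Set E) (e : E) : depth 𝒞 X e = sSup (dset 𝒞 X e) := rfl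

lemma chainMemImp {r s : E → E → Prop} {P : E → Prop}
    (H : ∀ a b, P a → P b → r a b → s a b) :
    ∀ l : List E, l.Chain' r → (∀ x ∈ l, P x) → l.Chain' s := by
  intro l
  induction l with
  | nil => simp [List.Chain']
  | cons a t ih =>
    cases t with
    | nil => simp [List.Chain']
    | cons b t =>
      intro hc hm
      simp only [List.Chain', List.isChain_cons_cons] at hc ⊢
      refine ⟨H a b (hm a (by simp)) (hm b (by simp)) hc.1, ih hc.2 ?_⟩
      intro x hx
      exact hm x (List.mem_cons_of_mem a hx)

lemma chainPairwise (h : IsStable 𝒞) {X : Set E} (hX : X ∈ 𝒞.C) {l : List E}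
    (hc : l.Chain' (lt 𝒞 X)) (hm : ∀ x ∈ l, x ∈ X) :
    l.Pairwise (fun a b => a ∈ X ∧ b ∈ X ∧ lt 𝒞 X a b) := by
  set r : E → E → Prop := fun a b => a ∈ X ∧ b ∈ X ∧ lt 𝒞 X a b with hr
  haveI : IsTrans E r := ⟨fun a b c hab hbc =>
    ⟨hab.1, hbc.2.1, ltTrans h hX hab.1 hab.2.1 hbc.2.1 hab.2.2 hbc.2.2⟩⟩
  rw [← List.isChain_iff_pairwise]
  exact chainMemImp (fun a b ha hb hab => ⟨ha, hb, hab⟩) l hc hm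

lemma chainNodup (h : IsStable 𝒞) {X : Set E} (hX : X ∈ 𝒞.C) {l : List E}
    (hc : l.Chain' (lt 𝒞 X)) (hm : ∀ x ∈ l, x ∈ X) : l.Nodup := by
  refine (chainPairwise h hX hc hm).imp ?_
  intro a b hab
  exact hab.2.2.2

lemma chainLength (h : IsStable 𝒞) {X : Set E} (hX : X ∈ 𝒞.C) {l : List E}
    (hc : l.Chain' (lt 𝒞 X)) (hm : ∀ x ∈ l, x ∈ X) : l.length ≤ X.ncard := by
  have hnd := chainNodup h hX hc hm
  have hfin := 𝒞.finite X hX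
  classical
  have hsub : l.toFinset ⊆ hfin.toFinset := by
    intro x hx
    rw [List.mem_toFinset] at hx
    rw [Set.Finite.mem_toFinset]
    exact hm x hx
  calc l.length = l.toFinset.card := (List.toFinset_card_of_nodup hnd).symm
    _ ≤ hfin.toFinset.card := Finset.card_le_card hsub
    _ = X.ncard := (Set.ncard_eq_toFinset_card X hfin).symm

lemma dsetBdd (h : IsStable 𝒞) {X : Set E} (hX : X ∈ 𝒞.C) (e : E) :
    BddAbove (dset 𝒞 X e) := by
  refine ⟨X.ncard, ?_⟩
  rintro n ⟨l, rfl, hc, hm, _⟩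
  exact chainLength h hX hc hm

lemma oneMemDset {X : Set E} {e : E} (he : e ∈ X) : 1 ∈ dset 𝒞 X e :=
  ⟨[e], rfl, by simp [List.Chain'], by simp [he], rfl⟩

lemma dsetNonempty {X : Set E} {e : E} (he : e ∈ X) : (dset 𝒞 X e).Nonempty :=
  ⟨1, oneMemDset he⟩

lemma depthMem (h : IsStable 𝒞) {X : Set E} (hX : X ∈ 𝒞.C) {e : E} (he : e ∈ X) :
    depth 𝒞 X e ∈ dset 𝒞 X e :=
  Nat.sSup_mem (dsetNonempty he) (dsetBdd h hX e)

lemma leDepth (h : IsStable 𝒞) {X : Set E} (hX : X ∈ 𝒞.C) {e : E} {n : ℕ}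
    (hn : n ∈ dset 𝒞 X e) : n ≤ depth 𝒞 X e :=
  le_csSup (dsetBdd h hX e) hn

lemma oneLeDepth (h : IsStable 𝒞) {X : Set E} (hX : X ∈ 𝒞.C) {e : E} (he : e ∈ X) :
    1 ≤ depth 𝒞 X e :=
  leDepth h hX (oneMemDset he)

lemma depthLe (h : IsStable 𝒞) {X : Set E} (hX : X ∈ 𝒞.C) {e : E} :
    depth 𝒞 X e ≤ X.ncard := by
  rcases Set.eq_empty_or_nonempty (dset 𝒞 X e) with hemp | hne
  · rw [depth_eq_sSup, hemp]
    simp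
  · obtain ⟨l, hl, hc, hm, _⟩ := Nat.sSup_mem hne (dsetBdd h hX e)
    rw [depth_eq_sSup, ← hl]
    exact chainLength h hX hc hm

lemma depthLt (h : IsStable 𝒞) {X : Set E} (hX : X ∈ 𝒞.C) {d e : E}
    (hd : d ∈ X) (he : e ∈ X) (hlt : lt 𝒞 X d e) :
    depth 𝒞 X d < depth 𝒞 X e := by
  obtain ⟨l, hl, hc, hm, hlast⟩ := depthMem h hX hd
  have hnew : depth 𝒞 X d + 1 ∈ dset 𝒞 X e := by
    refine ⟨l ++ [e], by simp [hl], ?_, ?_, by simp⟩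
    · simp only [List.Chain', List.isChain_append]
      refine ⟨hc, by simp, ?_⟩
      intro x hx y hy
      simp at hy
      subst hy
      rw [hlast] at hx
      simp at hx
      subst hx
      exact hlt
    · intro x hx
      rcases List.mem_append.1 hx with hx | hx
      · exact hm x hx
      · simp at hx; subst hx; exact he
  have := leDepth h hX hnew
  omega

end Aux2
section Aux3

variable {E : Type u} {L : Type v} {𝒞 : CS E L}

lemma pairwiseLast {r : E → E → Prop} :
    ∀ (l : List E) (e : E), l.Pairwise r → l.getLast? = some e →
      ∀ x ∈ l, x = e ∨ r x e := by
  intro l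
  induction l with
  | nil => simp
  | cons a t ih =>
    intro e hp hlast x hx
    cases t with
    | nil =>
      simp only [List.getLast?_singleton, Option.some.injEq] at hlast
      simp only [List.mem_singleton] at hx
      exact Or.inl (hx.trans hlast)
    | cons b t' =>
      have hlast' : (b :: t').getLast? = some e := by
        rwa [List.getLast?_cons_cons] at hlast
      rcases List.mem_cons.1 hx with rfl | hx'
      · have he : e ∈ b :: t' := List.mem_of_mem_getLast? hlast'
        exact Or.inr ((List.pairwise_cons.1 hp).1 e he)
      · exact ih e (List.pairwise_cons.1 hp).2 hlast' x hx'

lemma depthRestrict (h : IsStable 𝒞) {X Y : Set E} (hX : X ∈ 𝒞.C) (hY : Y ∈ 𝒞.C)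
    (hYX : Y ⊆ X) {e : E} (he : e ∈ Y) : depth 𝒞 Y e = depth 𝒞 X e := by
  have hset : dset 𝒞 Y e = dset 𝒞 X e := by
    ext n
    constructor
    · rintro ⟨l, rfl, hc, hm, hlast⟩
      refine ⟨l, rfl, ?_, fun x hx => hYX (hm x hx), hlast⟩
      exact chainMemImp (fun a b ha hb hab => (ltRestrict h hX hY hYX hb).1 hab) l hc hm
    · rintro ⟨l, rfl, hc, hm, hlast⟩
      have hp := chainPairwise h hX hc hm
      have hmY : ∀ x ∈ l, x ∈ Y := by
        intro x hx
        rcases pairwiseLast l e hp hlast x hx with rfl | hr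
        · exact he
        · exact hr.2.2.1 Y hY hYX he
      refine ⟨l, rfl, ?_, hmY, hlast⟩
      exact chainMemImp (fun a b ha hb hab => (ltRestrict h hX hY hYX hb).2 hab) l hc hmY
  rw [depth_eq_sSup, depth_eq_sSup, hset]

lemma existsMaxDepth {X S : Set E} (hfin : S.Finite) (hne : S.Nonempty) :
    ∃ e ∈ S, ∀ d ∈ S, depth 𝒞 X d ≤ depth 𝒞 X e := by
  obtain ⟨e, he, hmax⟩ := Set.Finite.exists_maximalFor (depth 𝒞 X) S hfin hne
  refine ⟨e, he, fun d hd => ?_⟩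
  by_contra hlt
  push_neg at hlt
  exact absurd (hmax hd hlt.le) (by omega)

lemma maximalOfMaxDepth (h : IsStable 𝒞) {X : Set E} (hX : X ∈ 𝒞.C) {e : E}
    (he : e ∈ X) (hmaxd : ∀ d ∈ X, depth 𝒞 X d ≤ depth 𝒞 X e) :
    ∀ d ∈ X, ¬ lt 𝒞 X e d := by
  intro d hd hlt
  exact absurd (hmaxd d hd) (not_le_of_gt (depthLt h hX he hd hlt))

lemma existsMaximal (h : IsStable 𝒞) {X : Set E} (hX : X ∈ 𝒞.C) (hne : X.Nonempty) :
    ∃ e ∈ X, ∀ d ∈ X, ¬ lt 𝒞 X e d := by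
  obtain ⟨e, he, hmaxd⟩ := existsMaxDepth (𝒞 := 𝒞) (X := X) (𝒞.finite X hX) hne
  exact ⟨e, he, maximalOfMaxDepth h hX he hmaxd⟩

lemma belowUniqueMax (h : IsStable 𝒞) {X : Set E} (hX : X ∈ 𝒞.C) {e : E}
    (he : e ∈ X)
    (huniq : ∀ d ∈ X, (∀ y ∈ X, ¬ lt 𝒞 X d y) → d = e) :
    ∀ d ∈ X, d ≠ e → lt 𝒞 X d e := by
  intro d hd hne
  set U := {x ∈ X | x = d ∨ lt 𝒞 X d x} with hU
  have hUX : U ⊆ X := fun x hx => hx.1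
  have hdU : d ∈ U := ⟨hd, Or.inl rfl⟩
  obtain ⟨c, hc, hmaxd⟩ := existsMaxDepth (𝒞 := 𝒞) (X := X)
    ((𝒞.finite X hX).subset hUX) ⟨d, hdU⟩
  have hcmax : ∀ y ∈ X, ¬ lt 𝒞 X c y := by
    intro y hy hlty
    have hyU : y ∈ U := by
      rcases hc.2 with rfl | hdc
      · exact ⟨hy, Or.inr hlty⟩
      · exact ⟨hy, Or.inr (ltTrans h hX hd hc.1 hy hdc hlty)⟩
    exact absurd (hmaxd y hyU) (not_le_of_gt (depthLt h hX hc.1 hy hlty))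
  have hce : c = e := huniq c hc.1 hcmax
  rcases hc.2 with rfl | hdc
  · exact absurd hce hne
  · exact hce ▸ hdc

lemma depthTop (h : IsStable 𝒞) {X : Set E} (hX : X ∈ 𝒞.C) {e d₀ : E}
    (he : e ∈ X) (hd₀ : d₀ ∈ X) (hd₀e : d₀ ≠ e)
    (hbelow : ∀ d ∈ X, d ≠ e → lt 𝒞 X d e)
    (hmaxd₀ : ∀ d ∈ X, d ≠ e → depth 𝒞 X d ≤ depth 𝒞 X d₀) :
    depth 𝒞 X e = depth 𝒞 X d₀ + 1 := by
  have hge : depth 𝒞 X d₀ + 1 ≤ depth 𝒞 X e := by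
    have := depthLt h hX hd₀ he (hbelow d₀ hd₀ hd₀e)
    omega
  have hle : depth 𝒞 X e ≤ depth 𝒞 X d₀ + 1 := by
    obtain ⟨l, hl, hc, hm, hlast⟩ := depthMem h hX he
    have hsplit : l.dropLast ++ [e] = l := List.dropLast_append_getLast? e hlast
    rcases List.eq_nil_or_concat l.dropLast with hnil | ⟨l', x, hx⟩
    · have : l.length = 1 := by
        rw [← hsplit, hnil]; simp
      omega
    · set d := l.dropLast.getLast (by rw [hx]; simp) with hd
      have hclast : l.dropLast.getLast? = some d := by
        rw [List.getLast?_eq_getLast_of_ne_nil (by rw [hx]; simp)]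
      have hcc : l.Chain' (lt 𝒞 X) := hc
      rw [← hsplit] at hcc; simp only [List.Chain', List.isChain_append] at hcc
      have hlt : lt 𝒞 X d e := by
        refine hcc.2.2 d ?_ e (by simp)
        rw [hclast]; rfl
      have hmem : ∀ y ∈ l.dropLast, y ∈ X := fun y hy =>
        hm y (List.dropLast_subset l hy)
      have hdX : d ∈ X := hmem d (List.mem_of_mem_getLast? hclast)
      have hdmem : l.dropLast.length ∈ dset 𝒞 X d :=
        ⟨l.dropLast, rfl, hcc.1, hmem, hclast⟩
      have h1 := leDepth h hX hdmem
      have h2 := hmaxd₀ d hdX hlt.2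
      have hlen : l.dropLast.length = l.length - 1 := by
        rw [← hsplit]; simp
      omega
  omega

end Aux3
section Aux4

variable {E : Type u} {L : Type v} {𝒞 : CS E L}

/-- The label-depth profile of a configuration. -/
def phi (𝒞 : CS E L) (X : Set E) : Set (L × ℕ) :=
  (fun e => (𝒞.label e, depth 𝒞 X e)) '' X

lemma pairInj (h : IsStable 𝒞) (hac : NoEqAC 𝒞) {X : Set E} (hX : X ∈ 𝒞.C)
    {d e : E} (hd : d ∈ X) (he : e ∈ X) (hlab : 𝒞.label d = 𝒞.label e)
    (hdep : depth 𝒞 X d = depth 𝒞 X e) : d = e := by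
  refine hac X hX d hd e he ⟨?_, ?_⟩ hlab hdep
  · intro hlt
    exact absurd hdep (by have := depthLt h hX hd he hlt; omega)
  · intro hlt
    exact absurd hdep (by have := depthLt h hX he hd hlt; omega)

lemma phiDiff (h : IsStable 𝒞) {X : Set E} (hX : X ∈ 𝒞.C) {e : E}
    (hX' : X \ {e} ∈ 𝒞.C) :
    phi 𝒞 (X \ {e}) = (fun d => (𝒞.label d, depth 𝒞 X d)) '' (X \ {e}) := by
  apply Set.image_congr
  intro d hd
  rw [depthRestrict h hX hX' Set.diff_subset hd]

lemma phiInsert (h : IsStable 𝒞) {X : Set E} (hX : X ∈ 𝒞.C) {e : E} (he : e ∈ X)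
    (hX' : X \ {e} ∈ 𝒞.C) :
    phi 𝒞 X = insert (𝒞.label e, depth 𝒞 X e) (phi 𝒞 (X \ {e})) := by
  rw [phiDiff h hX hX']
  have : X = insert e (X \ {e}) := by
    rw [Set.insert_diff_singleton, Set.insert_eq_self.2 he]
  calc phi 𝒞 X = (fun d => (𝒞.label d, depth 𝒞 X d)) '' (insert e (X \ {e})) :=
        congrArg ((fun d => (𝒞.label d, depth 𝒞 X d)) '' ·) this
    _ = _ := by rw [Set.image_insert_eq]

lemma phiNotMem (h : IsStable 𝒞) (hac : NoEqAC 𝒞) {X : Set E} (hX : X ∈ 𝒞.C)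
    {e : E} (he : e ∈ X) (hX' : X \ {e} ∈ 𝒞.C) :
    (𝒞.label e, depth 𝒞 X e) ∉ phi 𝒞 (X \ {e}) := by
  rw [phiDiff h hX hX']
  rintro ⟨d, hd, heq⟩
  simp only [Prod.mk.injEq] at heq
  exact hd.2 (by simp [pairInj h hac hX hd.1 he heq.1 heq.2])

lemma rtransOfRemovable {X : Set E} (hX : X ∈ 𝒞.C) {e : E} (he : e ∈ X)
    (hX' : X \ {e} ∈ 𝒞.C) : RTrans 𝒞 (𝒞.label e) X (X \ {e}) :=
  ⟨hX', hX, Set.diff_subset, e,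
    Set.diff_diff_cancel_left (Set.singleton_subset_iff.2 he), rfl⟩

lemma destructRTrans {X X' : Set E} {a : L} (ht : RTrans 𝒞 a X X') :
    ∃ e ∈ X, X' = X \ {e} ∧ 𝒞.label e = a ∧ X' ∈ 𝒞.C ∧ X ∈ 𝒞.C := by
  obtain ⟨hX', hX, hsub, e, hdiff, hlab⟩ := ht
  have he : e ∈ X := by
    have : e ∈ X \ X' := hdiff ▸ rfl
    exact this.1
  refine ⟨e, he, ?_, hlab, hX', hX⟩
  rw [← hdiff, Set.diff_diff_cancel_left hsub]

lemma insertInj {α : Type*} {S : Set α} {p q : α} (hp : p ∉ S) (hq : q ∉ S)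
    (heq : insert p S = insert q S) : p = q := by
  have : p ∈ insert q S := heq ▸ Set.mem_insert p S
  rcases this with h | h
  · exact h
  · exact absurd h hp

lemma diffSingleton {α : Type*} {S : Set α} {p q : α} (hp : p ∉ S) (hq : q ∉ S)
    (hne : p ≠ q) : insert p S \ insert q S = {p} := by
  ext x
  simp only [Set.mem_diff, Set.mem_insert_iff, Set.mem_singleton_iff]
  constructor
  · rintro ⟨h1 | h1, h2⟩
    · exact h1
    · exact absurd (Or.inr h1) h2
  · rintro rfl
    exact ⟨Or.inl rfl, by rintro (rfl | h); exact hne rfl; exact hp h⟩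

end Aux4

section Aux5

variable {E₁ E₂ : Type u} {L : Type v} {𝒞 : CS E₁ L} {𝒟 : CS E₂ L}

lemma isRBFlip {R : Set E₁ → Set E₂ → Prop} (hR : IsRB 𝒞 𝒟 R) :
    IsRB 𝒟 𝒞 (fun Y X => R X Y) := by
  obtain ⟨⟨⟨hdom0, hdom⟩, hfwd⟩, hrev⟩ := hR
  refine ⟨⟨⟨hdom0, fun Y X hXY => ⟨(hdom X Y hXY).2, (hdom X Y hXY).1⟩⟩, ?_⟩, ?_⟩
  · intro Y X hXY
    exact ⟨(hfwd X Y hXY).2, (hfwd X Y hXY).1⟩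
  · intro Y X hXY
    exact ⟨(hrev X Y hXY).2, (hrev X Y hXY).1⟩

lemma emptyRel (h𝒟 : IsStable 𝒟) {R : Set E₁ → Set E₂ → Prop} (hR : IsRB 𝒞 𝒟 R)
    {Y : Set E₂} (hRY : R ∅ Y) : Y = ∅ := by
  by_contra hne
  have hY : Y ∈ 𝒟.C := ((hR.1.1.2 _ _ hRY).2)
  obtain ⟨v, hv, hYv⟩ := h𝒟.2.1 Y hY hne
  have hrt : RTrans 𝒟 (𝒟.label v) Y (Y \ {v}) := rtransOfRemovable hY hv hYv
  obtain ⟨X', hrt', -⟩ := (hR.2 _ _ hRY).2 _ _ hrt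
  obtain ⟨e, he, -⟩ := destructRTrans hrt'
  exact he

end Aux5
section Aux6

variable {E₁ E₂ : Type u} {L : Type v} {𝒞 : CS E₁ L} {𝒟 : CS E₂ L}

lemma phiEq (h𝒞 : IsStable 𝒞) (h𝒟 : IsStable 𝒟)
    (hac𝒞 : NoEqAC 𝒞) (hac𝒟 : NoEqAC 𝒟)
    {R : Set E₁ → Set E₂ → Prop} (hR : IsRB 𝒞 𝒟 R) :
    ∀ X Y, R X Y → phi 𝒞 X = phi 𝒟 Y := by
  suffices main : ∀ n : ℕ, ∀ X Y, R X Y → X.ncard ≤ n → phi 𝒞 X = phi 𝒟 Y by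
    intro X Y hXY; exact main X.ncard X Y hXY le_rfl
  intro n
  induction n with
  | zero =>
    intro X Y hXY hcard
    have hX : X ∈ 𝒞.C := (hR.1.1.2 _ _ hXY).1
    have hX0 : X = ∅ := by rw [← Set.ncard_eq_zero (𝒞.finite X hX)]; omega
    subst hX0
    rw [emptyRel h𝒟 hR hXY]
    simp [phi]
  | succ n ih =>
    intro X Y hXY hcard
    have hX : X ∈ 𝒞.C := (hR.1.1.2 _ _ hXY).1
    have hY : Y ∈ 𝒟.C := (hR.1.1.2 _ _ hXY).2
    rcases Set.eq_empty_or_nonempty X with rfl | hXne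
    · rw [emptyRel h𝒟 hR hXY]; simp [phi]
    by_contra hne
    have claimX : ∀ e ∈ X, (∀ d ∈ X, ¬ lt 𝒞 X e d) →
        ∃ e' ∈ Y, Y \ {e'} ∈ 𝒟.C ∧ 𝒟.label e' = 𝒞.label e ∧
          R (X \ {e}) (Y \ {e'}) ∧ phi 𝒞 (X \ {e}) = phi 𝒟 (Y \ {e'}) ∧
          (𝒞.label e, depth 𝒞 X e) ≠ (𝒟.label e', depth 𝒟 Y e') ∧
          phi 𝒞 X \ phi 𝒟 Y = {(𝒞.label e, depth 𝒞 X e)} := by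
      intro e he hemax
      have hX' : X \ {e} ∈ 𝒞.C := removableOfMaximal h𝒞 hX he hemax
      obtain ⟨Y', hrt', hR'⟩ := (hR.2 _ _ hXY).1 _ _ (rtransOfRemovable hX he hX')
      obtain ⟨e', he', rfl, hlab', hY', -⟩ := destructRTrans hrt'
      have hcard' : (X \ {e}).ncard ≤ n := by
        have := Set.ncard_diff_singleton_lt_of_mem he (𝒞.finite X hX)
        omega
      have hS : phi 𝒞 (X \ {e}) = phi 𝒟 (Y \ {e'}) := ih _ _ hR' hcard'
      have hdX := phiInsert h𝒞 hX he hX'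
      have hdY := phiInsert h𝒟 hY he' hY'
      have hnX := phiNotMem h𝒞 hac𝒞 hX he hX'
      have hnY := phiNotMem h𝒟 hac𝒟 hY he' hY'
      have hpq : (𝒞.label e, depth 𝒞 X e) ≠ (𝒟.label e', depth 𝒟 Y e') := by
        intro hpq
        exact hne (by rw [hdX, hdY, ← hS, hpq])
      refine ⟨e', he', hY', hlab', hR', hS, hpq, ?_⟩
      rw [hdX, hdY, ← hS]
      exact diffSingleton hnX (by rw [hS]; exact hnY) hpq
    have claimY : ∀ e' ∈ Y, (∀ d ∈ Y, ¬ lt 𝒟 Y e' d) →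
        phi 𝒟 Y \ phi 𝒞 X = {(𝒟.label e', depth 𝒟 Y e')} := by
      intro e' he' hemax
      have hY' : Y \ {e'} ∈ 𝒟.C := removableOfMaximal h𝒟 hY he' hemax
      obtain ⟨X', hrt', hR'⟩ := (hR.2 _ _ hXY).2 _ _ (rtransOfRemovable hY he' hY')
      obtain ⟨e, he, rfl, hlab, hX', -⟩ := destructRTrans hrt'
      have hcard' : (X \ {e}).ncard ≤ n := by
        have := Set.ncard_diff_singleton_lt_of_mem he (𝒞.finite X hX)
        omega
      have hS : phi 𝒞 (X \ {e}) = phi 𝒟 (Y \ {e'}) := ih _ _ hR' hcard'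
      have hdX := phiInsert h𝒞 hX he hX'
      have hdY := phiInsert h𝒟 hY he' hY'
      have hnX := phiNotMem h𝒞 hac𝒞 hX he hX'
      have hnY := phiNotMem h𝒟 hac𝒟 hY he' hY'
      have hpq : (𝒟.label e', depth 𝒟 Y e') ≠ (𝒞.label e, depth 𝒞 X e) := by
        intro hpq
        exact hne (by rw [hdX, hdY, ← hS, hpq])
      rw [hdX, hdY, ← hS]
      exact diffSingleton (by rw [hS]; exact hnY) hnX hpq
    obtain ⟨e₀, he₀, hmaxd₀⟩ := existsMaxDepth (𝒞 := 𝒞) (X := X) (𝒞.finite X hX) hXne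
    have hmax₀ : ∀ d ∈ X, ¬ lt 𝒞 X e₀ d := maximalOfMaxDepth h𝒞 hX he₀ hmaxd₀
    have huniqX : ∀ d ∈ X, (∀ y ∈ X, ¬ lt 𝒞 X d y) → d = e₀ := by
      intro d hd hdmax
      obtain ⟨_, _, _, _, _, _, _, hdiff1⟩ := claimX d hd hdmax
      obtain ⟨_, _, _, _, _, _, _, hdiff2⟩ := claimX e₀ he₀ hmax₀
      have hpe := Set.singleton_eq_singleton_iff.1 (hdiff1.symm.trans hdiff2)
      simp only [Prod.mk.injEq] at hpe
      exact pairInj h𝒞 hac𝒞 hX hd he₀ hpe.1 hpe.2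
    obtain ⟨e'₀, he'₀, hYe'₀, hlab₀, hR₀, hS₀, hpq₀, -⟩ := claimX e₀ he₀ hmax₀
    have hmax'₀ : ∀ d ∈ Y, ¬ lt 𝒟 Y e'₀ d := maximalOfRemovable hYe'₀
    have huniqY : ∀ d ∈ Y, (∀ y ∈ Y, ¬ lt 𝒟 Y d y) → d = e'₀ := by
      intro d hd hdmax
      have hdiff1 := claimY d hd hdmax
      have hdiff2 := claimY e'₀ he'₀ hmax'₀
      have hpe := Set.singleton_eq_singleton_iff.1 (hdiff1.symm.trans hdiff2)
      simp only [Prod.mk.injEq] at hpe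
      exact pairInj h𝒟 hac𝒟 hY hd he'₀ hpe.1 hpe.2
    have hbelowX : ∀ d ∈ X, d ≠ e₀ → lt 𝒞 X d e₀ := belowUniqueMax h𝒞 hX he₀ huniqX
    have hbelowY : ∀ d ∈ Y, d ≠ e'₀ → lt 𝒟 Y d e'₀ := belowUniqueMax h𝒟 hY he'₀ huniqY
    have hX'₀ : X \ {e₀} ∈ 𝒞.C := removableOfMaximal h𝒞 hX he₀ hmax₀
    have hdepeq : depth 𝒞 X e₀ = depth 𝒟 Y e'₀ := by
      rcases Set.eq_empty_or_nonempty (X \ {e₀}) with hXe | hXe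
      · have hY0 : Y \ {e'₀} = ∅ := by
          have hphi : phi 𝒟 (Y \ {e'₀}) = ∅ := by rw [← hS₀, hXe]; simp [phi]
          exact Set.image_eq_empty.1 hphi
        have hXs : X = {e₀} := by
          apply Set.Subset.antisymm
          · intro x hx
            by_contra hxe
            exact (Set.eq_empty_iff_forall_notMem.1 hXe x) ⟨hx, hxe⟩
          · simp [he₀]
        have hYs : Y = {e'₀} := by
          apply Set.Subset.antisymm
          · intro y hy
            by_contra hye
            exact (Set.eq_empty_iff_forall_notMem.1 hY0 y) ⟨hy, hye⟩
          · simp [he'₀]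
        have d1 := depthLe h𝒞 hX (e := e₀)
        have d2 := depthLe h𝒟 hY (e := e'₀)
        have c1 : X.ncard = 1 := by rw [hXs]; exact Set.ncard_singleton _
        have c2 : Y.ncard = 1 := by rw [hYs]; exact Set.ncard_singleton _
        have d3 := oneLeDepth h𝒞 hX he₀
        have d4 := oneLeDepth h𝒟 hY he'₀
        omega
      · obtain ⟨d₀, hd₀, hmaxd⟩ := existsMaxDepth (𝒞 := 𝒞) (X := X)
          ((𝒞.finite X hX).subset Set.diff_subset) hXe
        have hYne : (Y \ {e'₀}).Nonempty := by
          rcases Set.eq_empty_or_nonempty (Y \ {e'₀}) with h0 | h0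
          · exfalso
            have hphi : phi 𝒞 (X \ {e₀}) = ∅ := by rw [hS₀, h0]; simp [phi]
            obtain ⟨x, hx⟩ := hXe
            exact (Set.eq_empty_iff_forall_notMem.1 (Set.image_eq_empty.1 hphi) x) hx
          · exact h0
        obtain ⟨d'₀, hd'₀, hmaxd'⟩ := existsMaxDepth (𝒞 := 𝒟) (X := Y)
          ((𝒟.finite Y hY).subset Set.diff_subset) hYne
        have hd₀e : d₀ ≠ e₀ := fun h => hd₀.2 (by simp [h])
        have hd'₀e : d'₀ ≠ e'₀ := fun h => hd'₀.2 (by simp [h])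
        have hdX : depth 𝒞 X e₀ = depth 𝒞 X d₀ + 1 :=
          depthTop h𝒞 hX he₀ hd₀.1 hd₀e hbelowX
            (fun d hd hdne => hmaxd d ⟨hd, by simp [hdne]⟩)
        have hdY : depth 𝒟 Y e'₀ = depth 𝒟 Y d'₀ + 1 :=
          depthTop h𝒟 hY he'₀ hd'₀.1 hd'₀e hbelowY
            (fun d hd hdne => hmaxd' d ⟨hd, by simp [hdne]⟩)
        have h1 : depth 𝒞 X d₀ ≤ depth 𝒟 Y d'₀ := by
          have hmem : (𝒞.label d₀, depth 𝒞 X d₀) ∈ phi 𝒟 (Y \ {e'₀}) := by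
            rw [← hS₀, phiDiff h𝒞 hX hX'₀]
            exact ⟨d₀, hd₀, rfl⟩
          rw [phiDiff h𝒟 hY hYe'₀] at hmem
          obtain ⟨c, hc, hceq⟩ := hmem
          simp only [Prod.mk.injEq] at hceq
          rw [← hceq.2]
          exact hmaxd' c hc
        have h2 : depth 𝒟 Y d'₀ ≤ depth 𝒞 X d₀ := by
          have hmem : (𝒟.label d'₀, depth 𝒟 Y d'₀) ∈ phi 𝒞 (X \ {e₀}) := by
            rw [hS₀, phiDiff h𝒟 hY hYe'₀]
            exact ⟨d'₀, hd'₀, rfl⟩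
          rw [phiDiff h𝒞 hX hX'₀] at hmem
          obtain ⟨c, hc, hceq⟩ := hmem
          simp only [Prod.mk.injEq] at hceq
          rw [← hceq.2]
          exact hmaxd c hc
        omega
    exact hpq₀ (by rw [hlab₀, hdepeq])
end Aux6
section Aux7

variable {E₁ E₂ : Type u} {L : Type v} {𝒞 : CS E₁ L} {𝒟 : CS E₂ L}

lemma pairOfRemoved (h𝒞 : IsStable 𝒞) (h𝒟 : IsStable 𝒟)
    (hac𝒞 : NoEqAC 𝒞) (hac𝒟 : NoEqAC 𝒟)
    {R : Set E₁ → Set E₂ → Prop} (hR : IsRB 𝒞 𝒟 R)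
    {X : Set E₁} {Y : Set E₂} {e : E₁} {e' : E₂} (hXY : R X Y)
    (hX : X ∈ 𝒞.C) (hY : Y ∈ 𝒟.C) (he : e ∈ X) (he' : e' ∈ Y)
    (hX' : X \ {e} ∈ 𝒞.C) (hY' : Y \ {e'} ∈ 𝒟.C)
    (hR' : R (X \ {e}) (Y \ {e'})) :
    (𝒞.label e, depth 𝒞 X e) = (𝒟.label e', depth 𝒟 Y e') := by
  have h1 := phiEq h𝒞 h𝒟 hac𝒞 hac𝒟 hR X Y hXY
  have h2 := phiEq h𝒞 h𝒟 hac𝒞 hac𝒟 hR _ _ hR'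
  rw [phiInsert h𝒞 hX he hX', phiInsert h𝒟 hY he' hY', ← h2] at h1
  exact insertInj (phiNotMem h𝒞 hac𝒞 hX he hX')
    (by rw [h2]; exact phiNotMem h𝒟 hac𝒟 hY he' hY') h1

lemma reach (h𝒞 : IsStable 𝒞) (h𝒟 : IsStable 𝒟)
    (hac𝒞 : NoEqAC 𝒞) (hac𝒟 : NoEqAC 𝒟)
    {R : Set E₁ → Set E₂ → Prop} (hR : IsRB 𝒞 𝒟 R) :
    ∀ n : ℕ, ∀ X Y Z, R X Y → Z ∈ 𝒟.C → Z ⊆ Y → (Y \ Z).ncard = n →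
      ∃ W ∈ 𝒞.C, W ⊆ X ∧ R W Z ∧
        ∀ d ∈ X, ∀ e ∈ Y, 𝒞.label d = 𝒟.label e →
          depth 𝒞 X d = depth 𝒟 Y e → (d ∈ W ↔ e ∈ Z) := by
  intro n
  induction n with
  | zero =>
    intro X Y Z hXY hZ hZY hcard
    have hX : X ∈ 𝒞.C := (hR.1.1.2 _ _ hXY).1
    have hY : Y ∈ 𝒟.C := (hR.1.1.2 _ _ hXY).2
    have hZeq : Z = Y := by
      have h0 : Y \ Z = ∅ := by
        rw [← Set.ncard_eq_zero ((𝒟.finite Y hY).subset Set.diff_subset)]; omega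
      exact Set.Subset.antisymm hZY (Set.diff_eq_empty.1 h0)
    subst hZeq
    exact ⟨X, hX, subset_rfl, hXY, fun d hd e he _ _ => iff_of_true hd he⟩
  | succ n ih =>
    intro X Y Z hXY hZ hZY hcard
    have hX : X ∈ 𝒞.C := (hR.1.1.2 _ _ hXY).1
    have hY : Y ∈ 𝒟.C := (hR.1.1.2 _ _ hXY).2
    have hne : (Y \ Z).Nonempty := by
      rcases Set.eq_empty_or_nonempty (Y \ Z) with h0 | h0
      · rw [h0] at hcard; simp at hcard
      · exact h0
    obtain ⟨v, hv, hmaxv⟩ := existsMaxDepth (𝒞 := 𝒟) (X := Y)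
      ((𝒟.finite Y hY).subset Set.diff_subset) hne
    have hvmax : ∀ y ∈ Y, ¬ lt 𝒟 Y v y := by
      intro y hy hlt
      by_cases hyZ : y ∈ Z
      · exact hv.2 (hlt.1 Z hZ hZY hyZ)
      · exact absurd (hmaxv y ⟨hy, hyZ⟩) (not_le_of_gt (depthLt h𝒟 hY hv.1 hy hlt))
    have hY' : Y \ {v} ∈ 𝒟.C := removableOfMaximal h𝒟 hY hv.1 hvmax
    obtain ⟨X', hrt', hR'⟩ := (hR.2 _ _ hXY).2 _ _ (rtransOfRemovable hY hv.1 hY')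
    obtain ⟨u, hu, rfl, hlab, hX', -⟩ := destructRTrans hrt'
    have hZY' : Z ⊆ Y \ {v} := fun z hz =>
      ⟨hZY hz, by simp; rintro rfl; exact hv.2 hz⟩
    have hcard' : ((Y \ {v}) \ Z).ncard = n := by
      have hcomm : (Y \ {v}) \ Z = (Y \ Z) \ {v} := Set.diff_diff_comm
      rw [hcomm]
      have := Set.ncard_diff_singleton_of_mem hv
      omega
    obtain ⟨W, hW, hWX, hRWZ, hcond⟩ := ih (X \ {u}) (Y \ {v}) Z hR' hZ hZY' hcard'
    refine ⟨W, hW, hWX.trans Set.diff_subset, hRWZ, ?_⟩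
    intro d hd e he hl hdep
    have hpair := pairOfRemoved h𝒞 h𝒟 hac𝒞 hac𝒟 hR hXY hX hY hu hv.1 hX' hY' hR'
    simp only [Prod.mk.injEq] at hpair
    by_cases hev : e = v
    · subst hev
      have hdu : d = u := pairInj h𝒞 hac𝒞 hX hd hu (hl.trans hpair.1.symm)
        (hdep.trans hpair.2.symm)
      subst hdu
      constructor
      · intro hdW
        exact absurd (hWX hdW).2 (by simp)
      · intro heZ
        exact absurd heZ hv.2
    · have hdu : d ≠ u := by
        rintro rfl
        exact hev (pairInj h𝒟 hac𝒟 hY he hv.1 (hl.symm.trans hpair.1)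
          (hdep.symm.trans hpair.2))
      have hdm : d ∈ X \ {u} := ⟨hd, by simp [hdu]⟩
      have hem : e ∈ Y \ {v} := ⟨he, by simp [hev]⟩
      refine hcond d hdm e hem hl ?_
      rw [depthRestrict h𝒞 hX hX' Set.diff_subset hdm,
        depthRestrict h𝒟 hY hY' Set.diff_subset hem]
      exact hdep

lemma orderPres (h𝒞 : IsStable 𝒞) (h𝒟 : IsStable 𝒟)
    (hac𝒞 : NoEqAC 𝒞) (hac𝒟 : NoEqAC 𝒟)
    {R : Set E₁ → Set E₂ → Prop} (hR : IsRB 𝒞 𝒟 R)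
    {X : Set E₁} {Y : Set E₂} (hXY : R X Y)
    {d₁ d₂ : E₁} {e₁ e₂ : E₂} (hd₁ : d₁ ∈ X) (hd₂ : d₂ ∈ X)
    (he₁ : e₁ ∈ Y) (he₂ : e₂ ∈ Y)
    (hl₁ : 𝒞.label d₁ = 𝒟.label e₁) (hl₂ : 𝒞.label d₂ = 𝒟.label e₂)
    (hk₁ : depth 𝒞 X d₁ = depth 𝒟 Y e₁) (hk₂ : depth 𝒞 X d₂ = depth 𝒟 Y e₂)
    (hlt : lt 𝒞 X d₁ d₂) : lt 𝒟 Y e₁ e₂ := by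
  have hX : X ∈ 𝒞.C := (hR.1.1.2 _ _ hXY).1
  have hY : Y ∈ 𝒟.C := (hR.1.1.2 _ _ hXY).2
  have hne : e₁ ≠ e₂ := by
    rintro rfl
    have := depthLt h𝒞 hX hd₁ hd₂ hlt
    omega
  refine ⟨?_, hne⟩
  by_contra hnle
  simp only [le] at hnle
  push_neg at hnle
  obtain ⟨Z, hZ, hZY, he₂Z, he₁Z⟩ := hnle
  obtain ⟨W, hW, hWX, hRWZ, hcond⟩ := reach h𝒞 h𝒟 hac𝒞 hac𝒟 hR
    (Y \ Z).ncard X Y Z hXY hZ hZY rfl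
  have hd₂W : d₂ ∈ W := (hcond d₂ hd₂ e₂ he₂ hl₂ hk₂).2 he₂Z
  have hd₁W : d₁ ∈ W := hlt.1 W hW hWX hd₂W
  exact he₁Z ((hcond d₁ hd₁ e₁ he₁ hl₁ hk₁).1 hd₁W)

end Aux7
section Aux8

variable {E₁ E₂ : Type u} {L : Type v} {𝒞 : CS E₁ L} {𝒟 : CS E₂ L}

/-- The canonical label-and-depth-matching isomorphism. -/
def fIso (𝒞 : CS E₁ L) (𝒟 : CS E₂ L) (X : Set E₁) (Y : Set E₂) : Set (E₁ × E₂) :=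
  {p | p.1 ∈ X ∧ p.2 ∈ Y ∧ 𝒞.label p.1 = 𝒟.label p.2 ∧
    depth 𝒞 X p.1 = depth 𝒟 Y p.2}

lemma fIsoEmpty : fIso 𝒞 𝒟 ∅ ∅ = ∅ := by
  ext p
  simp [fIso]

lemma partnerR (h𝒞 : IsStable 𝒞) (h𝒟 : IsStable 𝒟)
    (hac𝒞 : NoEqAC 𝒞) (hac𝒟 : NoEqAC 𝒟)
    {R : Set E₁ → Set E₂ → Prop} (hR : IsRB 𝒞 𝒟 R)
    {X : Set E₁} {Y : Set E₂} (hXY : R X Y) {d : E₁} (hd : d ∈ X) :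
    ∃! e, (d, e) ∈ fIso 𝒞 𝒟 X Y := by
  have hY : Y ∈ 𝒟.C := (hR.1.1.2 _ _ hXY).2
  have hphi := phiEq h𝒞 h𝒟 hac𝒞 hac𝒟 hR X Y hXY
  have hmem : (𝒞.label d, depth 𝒞 X d) ∈ phi 𝒟 Y := by
    rw [← hphi]; exact ⟨d, hd, rfl⟩
  obtain ⟨e, he, heq⟩ := hmem
  simp only [Prod.mk.injEq] at heq
  refine ⟨e, ⟨hd, he, heq.1.symm, heq.2.symm⟩, ?_⟩
  intro y hy
  exact pairInj h𝒟 hac𝒟 hY hy.2.1 he (hy.2.2.1.symm.trans heq.1.symm)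
    (hy.2.2.2.symm.trans heq.2.symm)

lemma partnerL (h𝒞 : IsStable 𝒞) (h𝒟 : IsStable 𝒟)
    (hac𝒞 : NoEqAC 𝒞) (hac𝒟 : NoEqAC 𝒟)
    {R : Set E₁ → Set E₂ → Prop} (hR : IsRB 𝒞 𝒟 R)
    {X : Set E₁} {Y : Set E₂} (hXY : R X Y) {e : E₂} (he : e ∈ Y) :
    ∃! d, (d, e) ∈ fIso 𝒞 𝒟 X Y := by
  have hX : X ∈ 𝒞.C := (hR.1.1.2 _ _ hXY).1
  have hphi := phiEq h𝒞 h𝒟 hac𝒞 hac𝒟 hR X Y hXY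
  have hmem : (𝒟.label e, depth 𝒟 Y e) ∈ phi 𝒞 X := by
    rw [hphi]; exact ⟨e, he, rfl⟩
  obtain ⟨d, hd, heq⟩ := hmem
  simp only [Prod.mk.injEq] at heq
  refine ⟨d, ⟨hd, he, heq.1, heq.2⟩, ?_⟩
  intro y hy
  exact pairInj h𝒞 hac𝒞 hX hy.1 hd (hy.2.2.1.trans heq.1.symm)
    (hy.2.2.2.trans heq.2.symm)

lemma restrictIso (h𝒞 : IsStable 𝒞) (h𝒟 : IsStable 𝒟)
    (hac𝒞 : NoEqAC 𝒞) (hac𝒟 : NoEqAC 𝒟)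
    {R : Set E₁ → Set E₂ → Prop} (hR : IsRB 𝒞 𝒟 R)
    {X : Set E₁} {Y : Set E₂} {e : E₁} {e' : E₂}
    (hXY : R X Y) (hXY' : R (X \ {e}) (Y \ {e'})) (he : e ∈ X) (he' : e' ∈ Y) :
    {p ∈ fIso 𝒞 𝒟 X Y | p.1 ∈ X \ {e}} = fIso 𝒞 𝒟 (X \ {e}) (Y \ {e'}) := by
  have hX : X ∈ 𝒞.C := (hR.1.1.2 _ _ hXY).1
  have hY : Y ∈ 𝒟.C := (hR.1.1.2 _ _ hXY).2
  have hXm : X \ {e} ∈ 𝒞.C := (hR.1.1.2 _ _ hXY').1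
  have hYm : Y \ {e'} ∈ 𝒟.C := (hR.1.1.2 _ _ hXY').2
  have hpair := pairOfRemoved h𝒞 h𝒟 hac𝒞 hac𝒟 hR hXY hX hY he he' hXm hYm hXY'
  simp only [Prod.mk.injEq] at hpair
  ext ⟨d, y⟩
  simp only [Set.mem_setOf_eq, Set.mem_sep_iff, fIso]
  constructor
  · rintro ⟨⟨hdX, hyY, hlab, hdep⟩, hdm⟩
    have hyne : y ≠ e' := by
      rintro rfl
      have hde : d = e := pairInj h𝒞 hac𝒞 hX hdX he (hlab.trans hpair.1.symm)
        (hdep.trans hpair.2.symm)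
      exact hdm.2 (by simp [hde])
    have hym : y ∈ Y \ {e'} := ⟨hyY, by simp [hyne]⟩
    refine ⟨hdm, hym, hlab, ?_⟩
    rw [depthRestrict h𝒞 hX hXm Set.diff_subset hdm,
      depthRestrict h𝒟 hY hYm Set.diff_subset hym]
    exact hdep
  · rintro ⟨hdm, hym, hlab, hdep⟩
    refine ⟨⟨hdm.1, hym.1, hlab, ?_⟩, hdm⟩
    rw [← depthRestrict h𝒞 hX hXm Set.diff_subset hdm,
      ← depthRestrict h𝒟 hY hYm Set.diff_subset hym]
    exact hdep

lemma rbToHH (h𝒞 : IsStable 𝒞) (h𝒟 : IsStable 𝒟)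
    (hac𝒞 : NoEqAC 𝒞) (hac𝒟 : NoEqAC 𝒟)
    {R : Set E₁ → Set E₂ → Prop} (hR : IsRB 𝒞 𝒟 R) :
    IsHH 𝒞 𝒟 {T | ∃ X Y, R X Y ∧ T = (X, Y, fIso 𝒞 𝒟 X Y)} := by
  constructor
  · exact ⟨∅, ∅, hR.1.1.1, by rw [fIsoEmpty]⟩
  rintro X Y f ⟨X, Y, hXY, heq⟩
  simp only [Prod.mk.injEq] at heq
  obtain ⟨rfl, rfl, rfl⟩ := heq
  have hX : X ∈ 𝒞.C := (hR.1.1.2 _ _ hXY).1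
  have hY : Y ∈ 𝒟.C := (hR.1.1.2 _ _ hXY).2
  refine ⟨hX, hY, ?_, ?_, ?_, ?_⟩
  · refine ⟨fun p hp => ⟨hp.1, hp.2.1⟩,
      fun d hd => partnerR h𝒞 h𝒟 hac𝒞 hac𝒟 hR hXY hd,
      fun e he => partnerL h𝒞 h𝒟 hac𝒞 hac𝒟 hR hXY he,
      fun p hp => hp.2.2.1, ?_⟩
    intro p hp q hq
    constructor
    · intro hlt
      exact orderPres h𝒞 h𝒟 hac𝒞 hac𝒟 hR hXY hp.1 hq.1 hp.2.1 hq.2.1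
        hp.2.2.1 hq.2.2.1 hp.2.2.2 hq.2.2.2 hlt
    · intro hlt
      exact orderPres h𝒟 h𝒞 hac𝒟 hac𝒞 (isRBFlip hR) hXY hp.2.1 hq.2.1 hp.1 hq.1
        hp.2.2.1.symm hq.2.2.1.symm hp.2.2.2.symm hq.2.2.2.symm hlt
  · -- forward, 𝒞 side
    intro a X' hft
    obtain ⟨Y', hft', hR'⟩ := (hR.1.2 _ _ hXY).1 a X' hft
    obtain ⟨e, he, hXeq, -, -, -⟩ := destructRTrans (show RTrans 𝒞 a X' X from hft)
    obtain ⟨e', he', hYeq, -, -, -⟩ := destructRTrans (show RTrans 𝒟 a Y' Y from hft')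
    subst hXeq
    subst hYeq
    exact ⟨Y', fIso 𝒞 𝒟 X' Y', hft', ⟨X', Y', hR', rfl⟩,
      restrictIso h𝒞 h𝒟 hac𝒞 hac𝒟 hR hR' hXY he he'⟩
  · -- forward, 𝒟 side
    intro a Y' hft
    obtain ⟨X', hft', hR'⟩ := (hR.1.2 _ _ hXY).2 a Y' hft
    obtain ⟨e', he', hYeq, -, -, -⟩ := destructRTrans (show RTrans 𝒟 a Y' Y from hft)
    obtain ⟨e, he, hXeq, -, -, -⟩ := destructRTrans (show RTrans 𝒞 a X' X from hft')
    subst hXeq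
    subst hYeq
    exact ⟨X', fIso 𝒞 𝒟 X' Y', hft', ⟨X', Y', hR', rfl⟩,
      restrictIso h𝒞 h𝒟 hac𝒞 hac𝒟 hR hR' hXY he he'⟩
  · -- reverse, 𝒞 side
    intro a X' hrt
    obtain ⟨Y', hrt', hR'⟩ := (hR.2 _ _ hXY).1 a X' hrt
    obtain ⟨e, he, hXeq, -, -, -⟩ := destructRTrans hrt
    obtain ⟨e', he', hYeq, -, -, -⟩ := destructRTrans hrt'
    subst hXeq
    subst hYeq
    refine ⟨Y \ {e'}, fIso 𝒞 𝒟 (X \ {e}) (Y \ {e'}), hrt',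
      ⟨X \ {e}, Y \ {e'}, hR', rfl⟩, ?_⟩
    exact restrictIso h𝒞 h𝒟 hac𝒞 hac𝒟 hR hXY hR' he he'

lemma hhToRB (h𝒞 : IsStable 𝒞)
    {S : Set (Set E₁ × Set E₂ × Set (E₁ × E₂))} (hS : IsHH 𝒞 𝒟 S) :
    IsRB 𝒞 𝒟 (fun X Y => ∃ f, (X, Y, f) ∈ S) := by
  obtain ⟨h0, hprop⟩ := hS
  refine ⟨⟨⟨⟨∅, h0⟩, ?_⟩, ?_⟩, ?_⟩
  · rintro X Y ⟨f, hf⟩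
    exact ⟨(hprop X Y f hf).1, (hprop X Y f hf).2.1⟩
  · rintro X Y ⟨f, hf⟩
    constructor
    · intro a X' h
      obtain ⟨Y', f', hft, hmem, -⟩ := (hprop X Y f hf).2.2.2.1 a X' h
      exact ⟨Y', hft, f', hmem⟩
    · intro a Y' h
      obtain ⟨X', f', hft, hmem, -⟩ := (hprop X Y f hf).2.2.2.2.1 a Y' h
      exact ⟨X', hft, f', hmem⟩
  · rintro X Y ⟨f, hf⟩
    constructor
    · intro a X' h
      obtain ⟨Y', f', hrt, hmem, -⟩ := (hprop X Y f hf).2.2.2.2.2 a X' h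
      exact ⟨Y', hrt, f', hmem⟩
    · -- reverse, 𝒟 side, via the isomorphism
      intro a Y' hrt
      have hXC : X ∈ 𝒞.C := (hprop X Y f hf).1
      obtain ⟨e', he', hYeq, hlab, hY'C, -⟩ := destructRTrans hrt
      have iso := (hprop X Y f hf).2.2.1
      obtain ⟨d, hdf, hduniq⟩ := iso.2.2.1 e' he'
      have hdX : d ∈ X := (iso.1 _ hdf).1
      have hdmax : ∀ c ∈ X, ¬ lt 𝒞 X d c := by
        intro c hc hlt
        obtain ⟨c', hcf, -⟩ := iso.2.1 c hc
        have hlt' := (iso.2.2.2.2 _ hdf _ hcf).1 hlt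
        exact maximalOfRemovable (hYeq ▸ hY'C) c' ((iso.1 _ hcf).2) hlt'
      have hX' : X \ {d} ∈ 𝒞.C := removableOfMaximal h𝒞 hXC hdX hdmax
      have hrtC : RTrans 𝒞 (𝒞.label d) X (X \ {d}) := rtransOfRemovable hXC hdX hX'
      have hlabd : 𝒞.label d = a := by rw [iso.2.2.2.1 _ hdf]; exact hlab
      obtain ⟨Y'', f'', hrt'', hmem'', hres⟩ :=
        (hprop X Y f hf).2.2.2.2.2 _ _ hrtC
      obtain ⟨v, hvY, hY''eq, -, -, -⟩ := destructRTrans hrt''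
      have iso'' := (hprop _ _ _ hmem'').2.2.1
      have he'Y'' : e' ∉ Y'' := by
        intro hin
        obtain ⟨d₁, hd₁f, -⟩ := iso''.2.2.1 e' hin
        rw [← hres] at hd₁f
        have hd₁d : d₁ = d := hduniq d₁ hd₁f.1
        exact hd₁f.2.2 (by simp [hd₁d])
      have hYY : Y'' = Y' := by
        have hev : e' = v := by
          by_contra hne
          exact he'Y'' (hY''eq ▸ ⟨he', by simp [hne]⟩)
        rw [hY''eq, hYeq, hev]
      rw [hlabd] at hrtC
      rw [hYY] at hmem''
      exact ⟨X \ {d}, hrtC, f'', hmem''⟩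

end Aux8

/-- for stable configuration structures without equidepth
auto-concurrency, RB equivalence coincides with HH equivalence. -/
theorem stmt18 {E₁ E₂ : Type u} {L : Type v} (𝒞 : CS E₁ L) (𝒟 : CS E₂ L)
    (h𝒞 : IsStable 𝒞) (h𝒟 : IsStable 𝒟)
    (hac𝒞 : NoEqAC 𝒞) (hac𝒟 : NoEqAC 𝒟) :
    (∃ R : Set E₁ → Set E₂ → Prop, IsRB 𝒞 𝒟 R) ↔
    (∃ R : Set (Set E₁ × Set E₂ × Set (E₁ × E₂)), IsHH 𝒞 𝒟 R) := by
  constructor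
  · rintro ⟨R, hR⟩
    exact ⟨_, rbToHH h𝒞 h𝒟 hac𝒞 hac𝒟 hR⟩
  · rintro ⟨S, hS⟩
    exact ⟨_, hhToRB h𝒞 hS⟩
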